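/- The language A = { a b^{i₁} a b^{i₂} ⋯ a b^{i_k} : k ≥ 1, 0 ≤ i₁ ≤ i₂ ≤ ⋯ ≤ i_k } over the alphabet {a,b} has intermediate growth: for all real α, β > 1 there exists N such that for all n > N, the number f(n) of words in A of length n satisfies n^α < f(n) < β^n. -/

import Mathlib

/-- The two-letter alphabet `{a, b}`. -/
inductive AB : Type
  | a : AB
  | b : AB
deriving DecidableEq

/-- The language `A = { a b^{i₁} a b^{i₂} ⋯ a b^{i_k} : k ≥ 1, 0 ≤ i₁ ≤ ⋯ ≤ i_k }`:
a word lies in `A` iff it is the concatenation of `k ≥ 1` blocks `a b^{i_j}` with the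
exponents `i_j` forming a nondecreasing sequence of nonnegative integers. -/
def langA : Set (List AB) :=
  { w | ∃ l : List ℕ, l ≠ [] ∧ l.Pairwise (· ≤ ·) ∧
      w = (l.map (fun i => AB.a :: List.replicate i AB.b)).flatten }

/-- `growthA n` is the number of words of `A` of length exactly `n`. -/
noncomputable def growthA (n : ℕ) : ℕ :=
  Nat.card { w : List AB // w ∈ langA ∧ w.length = n }

def enc (l : List ℕ) : List AB :=
  (l.map (fun i => AB.a :: List.replicate i AB.b)).flatten

lemma enc_nil : enc [] = [] := rfl

lemma enc_cons (i : ℕ) (l : List ℕ) :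
    enc (i :: l) = AB.a :: (List.replicate i AB.b ++ enc l) := by
  simp [enc]

lemma enc_length (l : List ℕ) : (enc l).length = l.sum + l.length := by
  induction l with
  | nil => rfl
  | cons i l ih => simp [enc_cons, ih]; omega

lemma repl_cancel : ∀ (i j : ℕ) (l₁ l₂ : List ℕ),
    List.replicate i AB.b ++ enc l₁ = List.replicate j AB.b ++ enc l₂ →
    i = j ∧ enc l₁ = enc l₂ := by
  intro i
  induction i with
  | zero =>
    intro j l₁ l₂ h
    cases j with
    | zero => simpa using h
    | succ j =>
      exfalso
      simp only [List.replicate_zero, List.nil_append, List.replicate_succ,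
        List.cons_append] at h
      cases l₁ with
      | nil => simp [enc_nil] at h
      | cons i' l' => simp [enc_cons] at h
  | succ i ih =>
    intro j l₁ l₂ h
    cases j with
    | zero =>
      exfalso
      simp only [List.replicate_zero, List.nil_append, List.replicate_succ,
        List.cons_append] at h
      cases l₂ with
      | nil => simp [enc_nil] at h
      | cons i' l' => simp [enc_cons] at h
    | succ j =>
      simp only [List.replicate_succ, List.cons_append, List.cons.injEq, true_and] at h
      obtain ⟨h1, h2⟩ := ih j l₁ l₂ h
      exact ⟨by omega, h2⟩

lemma enc_injective : Function.Injective enc := by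
  intro l₁
  induction l₁ with
  | nil =>
    intro l₂ h
    cases l₂ with
    | nil => rfl
    | cons j l => simp [enc_nil, enc_cons] at h
  | cons i l ih =>
    intro l₂ h
    cases l₂ with
    | nil => simp [enc_nil, enc_cons] at h
    | cons j l' =>
      simp only [enc_cons, List.cons.injEq, true_and] at h
      obtain ⟨h1, h2⟩ := repl_cancel i j l l' h
      rw [h1, ih h2]

lemma sum_map_succ (l : List ℕ) : (l.map (· + 1)).sum = l.sum + l.length := by
  induction l with
  | nil => simp
  | cons x l ih => simp [ih]; omega

abbrev W (n : ℕ) := { w : List AB // w ∈ langA ∧ w.length = n }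

noncomputable def dec {n : ℕ} (w : W n) : List ℕ := w.2.1.choose

lemma dec_spec {n : ℕ} (w : W n) :
    dec w ≠ [] ∧ (dec w).Pairwise (· ≤ ·) ∧ w.1 = enc (dec w) :=
  w.2.1.choose_spec

noncomputable def MM {n : ℕ} (w : W n) : Multiset ℕ := ↑((dec w).map (· + 1))

lemma MM_sum {n : ℕ} (w : W n) : (MM w).sum = n := by
  have h := (dec_spec w).2.2
  have hlen : w.1.length = n := w.2.2
  rw [h, enc_length] at hlen
  simp only [MM, Multiset.sum_coe, sum_map_succ]
  omega

lemma MM_pos {n : ℕ} (w : W n) : ∀ x ∈ MM w, 1 ≤ x := by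
  intro x hx
  simp only [MM, Multiset.mem_coe, List.mem_map] at hx
  obtain ⟨i, _, rfl⟩ := hx
  omega

lemma MM_inj {n : ℕ} (w₁ w₂ : W n) (h : MM w₁ = MM w₂) : w₁ = w₂ := by
  have hperm : ((dec w₁).map (· + 1)).Perm ((dec w₂).map (· + 1)) :=
    Multiset.coe_eq_coe.mp h
  have hs₁ : ((dec w₁).map (· + 1)).Pairwise (· ≤ ·) :=
    (dec_spec w₁).2.1.map (· + 1) (fun a b hab => Nat.succ_le_succ hab)
  have hs₂ : ((dec w₂).map (· + 1)).Pairwise (· ≤ ·) :=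
    (dec_spec w₂).2.1.map (· + 1) (fun a b hab => Nat.succ_le_succ hab)
  have heq := List.Perm.eq_of_pairwise' hs₁ hs₂ hperm
  have hdec : dec w₁ = dec w₂ :=
    List.map_injective_iff.mpr (fun x y hxy => by omega) heq
  have : w₁.1 = w₂.1 := by
    rw [(dec_spec w₁).2.2, (dec_spec w₂).2.2, hdec]
  exact Subtype.ext this

lemma multiset_sum_le {s t : Multiset ℕ} (h : s ≤ t) : s.sum ≤ t.sum := by
  obtain ⟨u, rfl⟩ := Multiset.le_iff_exists_add.mp h
  simp

lemma MM_mem_le {n : ℕ} (w : W n) {x : ℕ} (hx : x ∈ MM w) : x ≤ n := by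
  have := Multiset.le_sum_of_mem hx
  rwa [MM_sum w] at this

noncomputable def bigL {n : ℕ} (w : W n) : List ℕ :=
  ((MM w).filter (fun x => n.sqrt < x)).sort (· ≤ ·)

lemma bigL_len {n : ℕ} (w : W n) : (bigL w).length ≤ n.sqrt := by
  set s := (MM w).filter (fun x => n.sqrt < x) with hs
  have hcard : s.card • (n.sqrt + 1) ≤ s.sum :=
    Multiset.card_nsmul_le_sum (fun x hx => by
      have := Multiset.of_mem_filter hx; omega)
  have hsum : s.sum ≤ n := by
    have := multiset_sum_le (Multiset.filter_le (fun x => n.sqrt < x) (MM w))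
    rwa [MM_sum w] at this
  have hlt : n < (n.sqrt + 1) * (n.sqrt + 1) := by
    simpa [Nat.succ_eq_add_one] using Nat.lt_succ_sqrt n
  have : (bigL w).length = s.card := by
    simp [bigL, hs, Multiset.length_sort]
  rw [this]
  by_contra hc
  push_neg at hc
  have : (n.sqrt + 1) * (n.sqrt + 1) ≤ s.card * (n.sqrt + 1) :=
    Nat.mul_le_mul_right _ hc
  simp only [smul_eq_mul] at hcard
  omega

noncomputable def F {n : ℕ} (w : W n) :
    (Fin (n.sqrt + 1) → Fin (n + 1)) × (Fin n.sqrt → Fin (n + 1)) :=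
  ⟨fun i => ⟨(MM w).count (i : ℕ), by
      have h1 := Multiset.count_le_card (i : ℕ) (MM w)
      have h2 : (MM w).card • 1 ≤ (MM w).sum := Multiset.card_nsmul_le_sum (MM_pos w)
      have h3 := MM_sum w
      simp only [smul_eq_mul, mul_one] at h2
      omega⟩,
   fun t => ⟨(bigL w).getD t 0, by
      rcases lt_or_ge (t : ℕ) (bigL w).length with h | h
      · rw [List.getD_eq_getElem _ 0 h]
        have hmem : (bigL w)[(t:ℕ)] ∈ bigL w := List.getElem_mem h
        have : (bigL w)[(t:ℕ)] ∈ MM w := by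
          have := (Multiset.mem_sort (α := ℕ) (· ≤ ·)).mp hmem
          exact Multiset.mem_of_mem_filter this
        have := MM_mem_le w this
        omega
      · rw [List.getD_eq_default _ 0 h]; omega⟩⟩

lemma ofFn_getD (L : List ℕ) (r : ℕ) (h : L.length ≤ r) :
    List.ofFn (fun t : Fin r => L.getD t 0) = L ++ List.replicate (r - L.length) 0 := by
  apply List.ext_getElem
  · simp; omega
  · intro i h1 h2
    simp only [List.getElem_ofFn]
    by_cases hi : i < L.length
    · rw [List.getElem_append_left hi, List.getD_eq_getElem _ 0 hi]
    · push_neg at hi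
      rw [List.getElem_append_right hi, List.getElem_replicate,
        List.getD_eq_default _ 0 hi]

lemma F_inj {n : ℕ} : Function.Injective (F (n := n)) := by
  intro w₁ w₂ h
  have h1 : ∀ i : Fin (n.sqrt + 1), (MM w₁).count (i : ℕ) = (MM w₂).count (i : ℕ) := by
    intro i
    have := congrFun (congrArg Prod.fst h) i
    exact congrArg Fin.val this
  have h2 : ∀ t : Fin n.sqrt, (bigL w₁).getD t 0 = (bigL w₂).getD t 0 := by
    intro t
    have := congrFun (congrArg Prod.snd h) t
    exact congrArg Fin.val this
  have hlists : bigL w₁ ++ List.replicate (n.sqrt - (bigL w₁).length) 0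
      = bigL w₂ ++ List.replicate (n.sqrt - (bigL w₂).length) 0 := by
    rw [← ofFn_getD _ _ (bigL_len w₁), ← ofFn_getD _ _ (bigL_len w₂)]
    exact congrArg List.ofFn (funext h2)
  apply MM_inj
  ext j
  rcases le_or_gt j n.sqrt with hj | hj
  · have := h1 ⟨j, by omega⟩
    simpa using this
  · have key : ∀ w : W n, (MM w).count j
        = (bigL w ++ List.replicate (n.sqrt - (bigL w).length) 0).count j := by
      intro w
      show _ = List.count j _
      have hfilter : (MM w).count j = ((MM w).filter (fun x => n.sqrt < x)).count j := by
        rw [Multiset.count_filter, if_pos hj]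
      rw [hfilter]
      have hsort : ((MM w).filter (fun x => n.sqrt < x)) = ↑(bigL w) :=
        (Multiset.sort_eq _ _).symm
      rw [hsort]
      rw [List.count_append]
      have : (List.replicate (n.sqrt - (bigL w).length) 0).count j = 0 := by
        simp [List.count_replicate]
        omega
      rw [this]
      simp [Multiset.coe_count]
    rw [key w₁, key w₂, hlists]

noncomputable instance W_finite (n : ℕ) : Finite (W n) :=
  Finite.of_injective F F_inj

lemma growthA_le (n : ℕ) : growthA n ≤ (n + 1) ^ (2 * n.sqrt + 1) := by
  have := Nat.card_le_card_of_injective (F (n := n)) F_inj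
  have hc : Nat.card ((Fin (n.sqrt + 1) → Fin (n + 1)) × (Fin n.sqrt → Fin (n + 1)))
      = (n + 1) ^ (2 * n.sqrt + 1) := by
    simp [Nat.card_eq_fintype_card, ← pow_add]
    ring_nf
  rw [hc] at this
  exact this

def tL {n : ℕ} (S : Finset (Fin n.sqrt)) : List ℕ :=
  (S.sort (· ≤ ·)).map (fun i => i.val + 1)

lemma tL_sum_len {n : ℕ} (S : Finset (Fin n.sqrt)) :
    (tL S).sum + (tL S).length = ∑ i ∈ S, (i.val + 2) := by
  have hsum : (tL S).sum = ∑ i ∈ S, (i.val + 1) := by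
    rw [tL, ← Multiset.sum_coe, ← Multiset.map_coe, Finset.sort_eq]
    rfl
  have hlen : (tL S).length = S.card := by
    simp [tL]
  rw [hsum, hlen, Finset.card_eq_sum_ones, ← Finset.sum_add_distrib]

lemma tL_bound {n : ℕ} (hn : 9 ≤ n) (S : Finset (Fin n.sqrt)) :
    (tL S).sum + (tL S).length ≤ n := by
  rw [tL_sum_len]
  have hm3 : 3 ≤ n.sqrt := Nat.le_sqrt.mpr (by omega)
  have hmn : n.sqrt * n.sqrt ≤ n := by
    have := Nat.sqrt_le' n
    simpa [pow_two] using this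
  have h1 : ∑ i ∈ S, (i.val + 2) ≤ ∑ i : Fin n.sqrt, (i.val + 2) :=
    Finset.sum_le_sum_of_subset (Finset.subset_univ S)
  have h2 : ∑ i : Fin n.sqrt, (i.val + 2) = ∑ j ∈ Finset.range n.sqrt, (j + 2) :=
    Fin.sum_univ_eq_sum_range (fun j => j + 2) n.sqrt
  have h3 : ∑ j ∈ Finset.range n.sqrt, (j + 2) = (∑ j ∈ Finset.range n.sqrt, j) + 2 * n.sqrt := by
    rw [Finset.sum_add_distrib]
    simp [mul_comm]
  have h4 : (∑ j ∈ Finset.range n.sqrt, j) * 2 = n.sqrt * (n.sqrt - 1) :=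
    Finset.sum_range_id_mul_two n.sqrt
  have h6 : n.sqrt * (n.sqrt - 1) + 4 * n.sqrt ≤ 2 * n := by
    have h7 : 3 * n.sqrt ≤ n.sqrt * n.sqrt := by nlinarith
    have h8 : n.sqrt * (n.sqrt - 1) + n.sqrt = n.sqrt * n.sqrt := by
      cases n.sqrt with
      | zero => simp
      | succ k => simp only [Nat.succ_sub_one]; ring
    omega
  omega

def lL {n : ℕ} (S : Finset (Fin n.sqrt)) : List ℕ :=
  List.replicate (n - ((tL S).sum + (tL S).length)) 0 ++ tL S

lemma tL_pos {n : ℕ} (S : Finset (Fin n.sqrt)) : ∀ x ∈ tL S, 0 < x := by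
  intro x hx
  simp only [tL, List.mem_map] at hx
  obtain ⟨i, _, rfl⟩ := hx
  omega

lemma tL_sorted {n : ℕ} (S : Finset (Fin n.sqrt)) : (tL S).Pairwise (· ≤ ·) := by
  rw [tL]
  exact (Finset.pairwise_sort S (· ≤ ·)).map (fun i => i.val + 1)
    (fun a b hab => Nat.succ_le_succ hab)

lemma lL_sorted {n : ℕ} (S : Finset (Fin n.sqrt)) : (lL S).Pairwise (· ≤ ·) := by
  rw [lL, List.pairwise_append]
  refine ⟨List.pairwise_replicate.mpr (by simp), tL_sorted S, ?_⟩
  intro x hx y hy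
  rw [List.eq_of_mem_replicate hx]
  exact Nat.zero_le y

lemma lL_ne_nil {n : ℕ} (hn : 9 ≤ n) (S : Finset (Fin n.sqrt)) : lL S ≠ [] := by
  rw [lL]
  intro h
  rw [List.append_eq_nil_iff] at h
  obtain ⟨h1, h2⟩ := h
  rw [h2] at h1
  simp only [List.sum_nil, List.length_nil, Nat.add_zero, Nat.sub_zero,
    List.replicate_eq_nil_iff] at h1
  omega

lemma lL_length {n : ℕ} (hn : 9 ≤ n) (S : Finset (Fin n.sqrt)) :
    (enc (lL S)).length = n := by
  have hb := tL_bound hn S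
  rw [enc_length, lL]
  simp only [List.sum_append, List.length_append, List.sum_replicate, List.length_replicate,
    smul_eq_mul, mul_zero]
  omega

lemma lL_inj {n : ℕ} (S₁ S₂ : Finset (Fin n.sqrt)) (h : lL S₁ = lL S₂) : S₁ = S₂ := by
  have hfil : ∀ S : Finset (Fin n.sqrt), (lL S).filter (fun x => decide (0 < x)) = tL S := by
    intro S
    rw [lL, List.filter_append]
    have h1 : (List.replicate (n - ((tL S).sum + (tL S).length)) 0).filter
        (fun x => decide (0 < x)) = [] := by
      simp [List.filter_replicate]
    have h2 : (tL S).filter (fun x => decide (0 < x)) = tL S :=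
      List.filter_eq_self.mpr (fun x hx => by simpa using tL_pos S x hx)
    rw [h1, h2, List.nil_append]
  have htL : tL S₁ = tL S₂ := by rw [← hfil S₁, ← hfil S₂, h]
  have hsort : S₁.sort (· ≤ ·) = S₂.sort (· ≤ ·) := by
    apply List.map_injective_iff.mpr _ htL
    intro x y hxy
    have hxy' : x.val + 1 = y.val + 1 := hxy
    exact Fin.ext (by omega)
  have : S₁.1 = S₂.1 := by
    rw [← Finset.sort_eq S₁ (· ≤ ·), ← Finset.sort_eq S₂ (· ≤ ·), hsort]
  exact Finset.val_injective this

noncomputable def G {n : ℕ} (hn : 9 ≤ n) (S : Finset (Fin n.sqrt)) : W n :=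
  ⟨enc (lL S), ⟨lL S, lL_ne_nil hn S, lL_sorted S, rfl⟩, lL_length hn S⟩

lemma growthA_ge {n : ℕ} (hn : 9 ≤ n) : 2 ^ n.sqrt ≤ growthA n := by
  have : Finite (W n) := W_finite n
  have hinj : Function.Injective (G hn) := by
    intro S₁ S₂ h
    apply lL_inj
    apply enc_injective
    exact congrArg Subtype.val h
  have := Nat.card_le_card_of_injective (G hn) hinj
  rwa [Nat.card_eq_fintype_card, Fintype.card_finset, Fintype.card_fin] at this

 open Real 
lemma log_le_four (x : ℝ) (hx : 1 ≤ x) : Real.log x ≤ 4 * x ^ (1/4 : ℝ) := by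
  have hx0 : 0 < x := by linarith
  have h1 : Real.log (x ^ (1/4 : ℝ)) = (1/4) * Real.log x := Real.log_rpow hx0 _
  have h2 : Real.log (x ^ (1/4 : ℝ)) ≤ x ^ (1/4 : ℝ) - 1 :=
    Real.log_le_sub_one_of_pos (Real.rpow_pos_of_pos hx0 _)
  nlinarith [Real.rpow_pos_of_pos hx0 (1/4 : ℝ)]

lemma quarter_lt {c x : ℝ} (hc : 0 ≤ c) (h : c ^ 4 < x) : c < x ^ (1/4 : ℝ) := by
  by_contra hcon
  push_neg at hcon
  have hx0 : 0 ≤ x := le_trans (by positivity) h.le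
  have : (x ^ (1/4 : ℝ)) ^ 4 ≤ c ^ 4 := by
    apply pow_le_pow_left₀ (by positivity) hcon
  rw [← Real.rpow_natCast (x ^ (1/4 : ℝ)) 4, ← Real.rpow_mul hx0] at this
  norm_num at this
  linarith

lemma lower_real (α : ℝ) (hα : 1 < α) :
    ∃ N : ℕ, ∀ n : ℕ, N < n → (n : ℝ) ^ α < (2 : ℝ) ^ n.sqrt := by
  have hl2 : 0 < Real.log 2 := Real.log_pos (by norm_num)
  set c : ℝ := 8 * α / Real.log 2 with hc
  have hc0 : 0 < c := by positivity
  refine ⟨max 16 ⌈c ^ 4⌉₊, fun n hn => ?_⟩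
  have hn16 : 16 ≤ n := le_trans (le_max_left _ _) hn.le
  have hx0 : (0:ℝ) < n := by positivity
  have hx1 : (1:ℝ) ≤ n := by exact_mod_cast Nat.one_le_of_lt hn16
  have hc4 : c ^ 4 < (n : ℝ) := by
    have h1 : c ^ 4 ≤ (⌈c ^ 4⌉₊ : ℝ) := Nat.le_ceil _
    have h2 : ⌈c ^ 4⌉₊ < n := lt_of_le_of_lt (le_max_right 16 _) hn
    calc c ^ 4 ≤ (⌈c ^ 4⌉₊ : ℝ) := h1
      _ < n := by exact_mod_cast h2
  have hq : c < (n : ℝ) ^ (1/4 : ℝ) := quarter_lt hc0.le hc4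
  have hq0 : (0:ℝ) < (n : ℝ) ^ (1/4 : ℝ) := Real.rpow_pos_of_pos hx0 _
  -- m ≥ √n / 2
  have hsqrt4 : (4:ℝ) ≤ Real.sqrt n := by
    rw [show (4:ℝ) = Real.sqrt 16 by
      rw [show (16:ℝ) = 4^2 by norm_num, Real.sqrt_sq (by norm_num)]]
    exact Real.sqrt_le_sqrt (by exact_mod_cast hn16)
  have hmlb : Real.sqrt n / 2 ≤ (n.sqrt : ℝ) := by
    have h1 : (n : ℝ) < ((n.sqrt : ℝ) + 1) ^ 2 := by
      have := Nat.lt_succ_sqrt n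
      have : (n:ℝ) < ((n.sqrt + 1 : ℕ) : ℝ) * ((n.sqrt + 1 : ℕ) : ℝ) := by exact_mod_cast this
      push_cast at this ⊢
      nlinarith
    have h2 : Real.sqrt n < (n.sqrt : ℝ) + 1 := by
      have h3 : (0:ℝ) ≤ (n.sqrt : ℝ) + 1 := by positivity
      nlinarith [Real.sq_sqrt hx0.le, Real.sqrt_nonneg (n:ℝ)]
    linarith
  -- key log inequality
  have hlog : α * Real.log n < (Real.sqrt n / 2) * Real.log 2 := by
    have h1 : Real.log n ≤ 4 * (n:ℝ) ^ (1/4 : ℝ) := log_le_four _ hx1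
    have h2 : Real.sqrt n = (n:ℝ) ^ (1/4 : ℝ) * (n:ℝ) ^ (1/4 : ℝ) := by
      rw [← Real.rpow_add hx0]
      norm_num
      rw [Real.sqrt_eq_rpow]
    have h3 : c * Real.log 2 = 8 * α := by
      rw [hc, div_mul_cancel₀ _ hl2.ne']
    have hα0 : (0:ℝ) ≤ α := by linarith
    have k1 : α * Real.log n ≤ α * (4 * (n:ℝ) ^ (1/4 : ℝ)) :=
      mul_le_mul_of_nonneg_left h1 hα0
    have k2 : 8 * α < (n:ℝ) ^ (1/4 : ℝ) * Real.log 2 := by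
      rw [← h3]
      exact mul_lt_mul_of_pos_right hq hl2
    have k3 := mul_lt_mul_of_pos_right k2 (show (0:ℝ) < (n:ℝ) ^ (1/4 : ℝ) / 2 by positivity)
    rw [h2]
    calc α * Real.log n ≤ α * (4 * (n:ℝ) ^ (1/4 : ℝ)) := k1
      _ = 8 * α * ((n:ℝ) ^ (1/4 : ℝ) / 2) := by ring
      _ < (n:ℝ) ^ (1/4 : ℝ) * Real.log 2 * ((n:ℝ) ^ (1/4 : ℝ) / 2) := k3
      _ = (n:ℝ) ^ (1/4 : ℝ) * (n:ℝ) ^ (1/4 : ℝ) / 2 * Real.log 2 := by ring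
  -- exponentiate
  have hstep : (n:ℝ) ^ α < (2:ℝ) ^ (Real.sqrt n / 2) := by
    rw [← Real.exp_log (Real.rpow_pos_of_pos hx0 α),
        ← Real.exp_log (Real.rpow_pos_of_pos (by norm_num : (0:ℝ) < 2) (Real.sqrt n / 2))]
    apply Real.exp_lt_exp.mpr
    rw [Real.log_rpow hx0, Real.log_rpow (by norm_num : (0:ℝ) < 2)]
    linarith
  have hstep2 : (2:ℝ) ^ (Real.sqrt n / 2) ≤ (2:ℝ) ^ ((n.sqrt : ℕ) : ℝ) :=
    Real.rpow_le_rpow_of_exponent_le (by norm_num) hmlb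
  calc (n:ℝ) ^ α < (2:ℝ) ^ (Real.sqrt n / 2) := hstep
    _ ≤ (2:ℝ) ^ ((n.sqrt : ℕ) : ℝ) := hstep2
    _ = (2:ℝ) ^ (n.sqrt : ℕ) := Real.rpow_natCast 2 n.sqrt

lemma upper_real (β : ℝ) (hβ : 1 < β) :
    ∃ N : ℕ, ∀ n : ℕ, N < n → ((n : ℝ) + 1) ^ (2 * n.sqrt + 1) < β ^ n := by
  have hlβ : 0 < Real.log β := Real.log_pos hβ
  set c : ℝ := 24 / Real.log β with hc
  have hc0 : 0 < c := by positivity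
  refine ⟨max 16 ⌈c ^ 4⌉₊, fun n hn => ?_⟩
  have hn16 : 16 ≤ n := le_trans (le_max_left _ _) hn.le
  have hx0 : (0:ℝ) < n := by positivity
  have hx1 : (1:ℝ) ≤ n := by exact_mod_cast Nat.one_le_of_lt hn16
  have hy0 : (0:ℝ) < (n:ℝ) + 1 := by positivity
  have hc4 : c ^ 4 < (n : ℝ) := by
    have h1 : c ^ 4 ≤ (⌈c ^ 4⌉₊ : ℝ) := Nat.le_ceil _
    have h2 : ⌈c ^ 4⌉₊ < n := lt_of_le_of_lt (le_max_right 16 _) hn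
    calc c ^ 4 ≤ (⌈c ^ 4⌉₊ : ℝ) := h1
      _ < n := by exact_mod_cast h2
  have hq : c < (n : ℝ) ^ (1/4 : ℝ) := quarter_lt hc0.le hc4
  have hq0 : (0:ℝ) < (n : ℝ) ^ (1/4 : ℝ) := Real.rpow_pos_of_pos hx0 _
  -- m ≤ √n, m ≥ 1
  have hm1 : 1 ≤ n.sqrt := by
    have : 1 ≤ Nat.sqrt 16 := by norm_num
    calc 1 ≤ Nat.sqrt 16 := this
      _ ≤ n.sqrt := Nat.sqrt_le_sqrt hn16
  have hmub : (n.sqrt : ℝ) ≤ Real.sqrt n := by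
    rw [Real.le_sqrt (by positivity) (by positivity)]
    have := Nat.sqrt_le' n
    exact_mod_cast this
  -- log inequality: (2m+1) * log(n+1) < n * log β
  have hlog : ((2 * n.sqrt + 1 : ℕ) : ℝ) * Real.log ((n:ℝ) + 1) < (n : ℝ) * Real.log β := by
    have h1 : Real.log ((n:ℝ)+1) ≤ 4 * ((n:ℝ)+1) ^ (1/4 : ℝ) := log_le_four _ (by linarith)
    have h2 : ((2 * n.sqrt + 1 : ℕ) : ℝ) ≤ 3 * (n.sqrt : ℝ) := by
      push_cast
      have : (1:ℝ) ≤ (n.sqrt : ℝ) := by exact_mod_cast hm1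
      linarith
    have h3 : (n.sqrt : ℝ) ≤ Real.sqrt ((n:ℝ)+1) := by
      apply le_trans hmub
      exact Real.sqrt_le_sqrt (by linarith)
    -- (2m+1) log(n+1) ≤ 3 √(n+1) * 4 (n+1)^{1/4} = 12 (n+1)^{3/4}
    have h4 : Real.sqrt ((n:ℝ)+1) * (((n:ℝ)+1) ^ (1/4 : ℝ)) = ((n:ℝ)+1) ^ (3/4 : ℝ) := by
      rw [Real.sqrt_eq_rpow, ← Real.rpow_add hy0]
      norm_num
    have h5 : ((n:ℝ)+1) ^ (3/4 : ℝ) ≤ (2 * n) ^ (3/4 : ℝ) := by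
      apply Real.rpow_le_rpow hy0.le (by linarith) (by norm_num)
    have h6 : ((2 * n : ℝ)) ^ (3/4 : ℝ) = 2 ^ (3/4 : ℝ) * (n:ℝ) ^ (3/4 : ℝ) :=
      Real.mul_rpow (by norm_num) hx0.le
    have h7 : (2:ℝ) ^ (3/4 : ℝ) ≤ 2 := by
      calc (2:ℝ) ^ (3/4 : ℝ) ≤ 2 ^ (1 : ℝ) :=
        Real.rpow_le_rpow_of_exponent_le (by norm_num) (by norm_num)
        _ = 2 := Real.rpow_one 2
    have h8 : (n:ℝ) * Real.log β = (n:ℝ) ^ (3/4 : ℝ) * ((n:ℝ) ^ (1/4 : ℝ) * Real.log β) := by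
      rw [← mul_assoc, ← Real.rpow_add hx0]
      norm_num
    have h9 : c * Real.log β = 24 := by rw [hc, div_mul_cancel₀ _ hlβ.ne']
    have h10 : 24 < (n:ℝ) ^ (1/4 : ℝ) * Real.log β := by
      calc 24 = c * Real.log β := h9.symm
        _ < (n:ℝ) ^ (1/4 : ℝ) * Real.log β := by
          exact mul_lt_mul_of_pos_right hq hlβ
    have h11 : (0:ℝ) < (n:ℝ) ^ (3/4 : ℝ) := Real.rpow_pos_of_pos hx0 _
    have hlogpos : 0 ≤ Real.log ((n:ℝ)+1) := Real.log_nonneg (by linarith)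
    have hsq1 : (0:ℝ) ≤ Real.sqrt ((n:ℝ)+1) := Real.sqrt_nonneg _
    have hq14 : (0:ℝ) < ((n:ℝ)+1) ^ (1/4 : ℝ) := Real.rpow_pos_of_pos hy0 _
    -- chain
    have step1 : ((2 * n.sqrt + 1 : ℕ) : ℝ) ≤ 3 * Real.sqrt ((n:ℝ)+1) :=
      le_trans h2 (mul_le_mul_of_nonneg_left h3 (by norm_num))
    calc ((2 * n.sqrt + 1 : ℕ) : ℝ) * Real.log ((n:ℝ) + 1)
        ≤ 3 * Real.sqrt ((n:ℝ)+1) * (4 * ((n:ℝ)+1) ^ (1/4 : ℝ)) :=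
          mul_le_mul step1 h1 hlogpos (by positivity)
      _ = 12 * (((n:ℝ)+1) ^ (3/4 : ℝ)) := by rw [← h4]; ring
      _ ≤ 12 * ((2 * (n:ℝ)) ^ (3/4 : ℝ)) := mul_le_mul_of_nonneg_left h5 (by norm_num)
      _ = 12 * (2 ^ (3/4 : ℝ) * (n:ℝ) ^ (3/4 : ℝ)) := by rw [h6]
      _ ≤ 12 * (2 * (n:ℝ) ^ (3/4 : ℝ)) := by
          apply mul_le_mul_of_nonneg_left _ (by norm_num)
          exact mul_le_mul_of_nonneg_right h7 h11.le
      _ = (n:ℝ) ^ (3/4 : ℝ) * 24 := by ring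
      _ < (n:ℝ) ^ (3/4 : ℝ) * ((n:ℝ) ^ (1/4 : ℝ) * Real.log β) :=
          mul_lt_mul_of_pos_left h10 h11
      _ = (n:ℝ) * Real.log β := h8.symm
  -- exponentiate
  have hL : (0:ℝ) < ((n:ℝ) + 1) ^ (2 * n.sqrt + 1) := by positivity
  have hR : (0:ℝ) < β ^ n := by positivity
  rw [← Real.exp_log hL, ← Real.exp_log hR]
  apply Real.exp_lt_exp.mpr
  rw [Real.log_pow, Real.log_pow]
  exact_mod_cast hlog

/-- The language `A` has intermediate growth: for all real `α, β > 1`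
there exists `N` such that for all `n > N`, `n^α < f(n) < β^n`, where `f(n)` is the
number of words of `A` of length `n`. -/
theorem stmt_1 (α β : ℝ) (hα : 1 < α) (hβ : 1 < β) :
    ∃ N : ℕ, ∀ n : ℕ, N < n →
      (n : ℝ) ^ α < (growthA n : ℝ) ∧ (growthA n : ℝ) < β ^ n := by
  obtain ⟨N₁, hN₁⟩ := lower_real α hα
  obtain ⟨N₂, hN₂⟩ := upper_real β hβ
  refine ⟨max 16 (max N₁ N₂), fun n hn => ?_⟩
  have hn16 : 16 < n := lt_of_le_of_lt (le_max_left _ _) hn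
  have hn1 : N₁ < n := lt_of_le_of_lt (le_trans (le_max_left _ _) (le_max_right _ _)) hn
  have hn2 : N₂ < n := lt_of_le_of_lt (le_trans (le_max_right _ _) (le_max_right _ _)) hn
  constructor
  · have h1 : (n : ℝ) ^ α < (2 : ℝ) ^ n.sqrt := hN₁ n hn1
    have h2 : 2 ^ n.sqrt ≤ growthA n := growthA_ge (by omega)
    calc (n : ℝ) ^ α < (2 : ℝ) ^ n.sqrt := h1
      _ = ((2 ^ n.sqrt : ℕ) : ℝ) := by push_cast; ring
      _ ≤ (growthA n : ℝ) := by exact_mod_cast h2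
  · have h1 : growthA n ≤ (n + 1) ^ (2 * n.sqrt + 1) := growthA_le n
    have h2 : ((n : ℝ) + 1) ^ (2 * n.sqrt + 1) < β ^ n := hN₂ n hn2
    calc (growthA n : ℝ) ≤ (((n + 1) ^ (2 * n.sqrt + 1) : ℕ) : ℝ) := by exact_mod_cast h1
      _ = ((n : ℝ) + 1) ^ (2 * n.sqrt + 1) := by push_cast; ring
      _ < β ^ n := h2
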